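/- Let k be a real number and define ψ(r) = r^{(k−1)/2} e^{−r} (1 + r) for r > 0. Then −ψ''(r) + ((k−1)(k−3)/(4r²)) ψ(r) − ((k+1)/(r+1)) ψ(r) = −ψ(r) for all r > 0. -/

import Mathlib

private lemma hD1 (a r : ℝ) (hr : 0 < r) :
    HasDerivAt (fun r : ℝ => r ^ a * Real.exp (-r) * (1 + r))
      (Real.exp (-r) * (a * r ^ (a - 1) * (1 + r) - r ^ a * (1 + r) + r ^ a)) r := by
  have h1 : HasDerivAt (fun r : ℝ => r ^ a) (a * r ^ (a - 1)) r := by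
    simpa [mul_comm] using Real.hasDerivAt_rpow_const (x := r) (p := a) (Or.inl hr.ne')
  have h2 : HasDerivAt (fun r : ℝ => Real.exp (-r)) (-Real.exp (-r)) r := by
    simpa using ((hasDerivAt_id r).neg).exp
  have h3 : HasDerivAt (fun r : ℝ => 1 + r) 1 r := by
    simpa using (hasDerivAt_id r).const_add 1
  have := (h1.mul h2).mul h3
  refine this.congr_deriv ?_
  simp only [Pi.mul_apply]; ring

private lemma hD2 (a r : ℝ) (hr : 0 < r) :
    HasDerivAt (fun r : ℝ =>
        Real.exp (-r) * (a * r ^ (a - 1) * (1 + r) - r ^ a * (1 + r) + r ^ a))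
      (Real.exp (-r) * (a * (a - 1) * r ^ (a - 2) * (1 + r) - 2 * a * r ^ (a - 1) * (1 + r)
        + 2 * a * r ^ (a - 1) + r ^ a * (1 + r) - 2 * r ^ a)) r := by
  have h1 : HasDerivAt (fun r : ℝ => r ^ a) (a * r ^ (a - 1)) r := by
    simpa [mul_comm] using Real.hasDerivAt_rpow_const (x := r) (p := a) (Or.inl hr.ne')
  have h1' : HasDerivAt (fun r : ℝ => r ^ (a - 1)) ((a - 1) * r ^ (a - 2)) r := by
    have := Real.hasDerivAt_rpow_const (x := r) (p := a - 1) (Or.inl hr.ne')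
    simpa [mul_comm, show a - 1 - 1 = a - 2 from by ring] using this
  have h2 : HasDerivAt (fun r : ℝ => Real.exp (-r)) (-Real.exp (-r)) r := by
    simpa using ((hasDerivAt_id r).neg).exp
  have h3 : HasDerivAt (fun r : ℝ => 1 + r) 1 r := by
    simpa using (hasDerivAt_id r).const_add 1
  have hin : HasDerivAt (fun r : ℝ => a * r ^ (a - 1) * (1 + r) - r ^ a * (1 + r) + r ^ a)
      ((a * ((a - 1) * r ^ (a - 2)) * (1 + r) + a * r ^ (a - 1) * 1)
        - (a * r ^ (a - 1) * (1 + r) + r ^ a * 1) + a * r ^ (a - 1)) r := by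
    exact (((h1'.const_mul a).mul h3).sub (h1.mul h3)).add h1
  have := h2.mul hin
  refine this.congr_deriv ?_
  ring

/-- The function `ψ(r) = r^{(k−1)/2} e^{−r} (1+r)` is an exact eigenfunction of the
softcore Coulomb Schrödinger equation with `v = k+1` and energy `E = −1`. -/
theorem softcore_ground_state
    (k : ℝ) (ψ : ℝ → ℝ)
    (hψ : ∀ r ∈ Set.Ioi (0 : ℝ), ψ r = r ^ ((k - 1) / 2) * Real.exp (-r) * (1 + r)) :
    ∀ r ∈ Set.Ioi (0 : ℝ),
      -deriv (deriv ψ) r + ((k - 1) * (k - 3) / (4 * r ^ 2)) * ψ r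
        - ((k + 1) / (r + 1)) * ψ r = -ψ r := by
  set a : ℝ := (k - 1) / 2 with ha
  intro r hr
  have hr0 : (0 : ℝ) < r := hr
  -- deriv ψ agrees with the explicit first derivative on Ioi 0
  have hderiv1 : ∀ s ∈ Set.Ioi (0 : ℝ), deriv ψ s =
      Real.exp (-s) * (a * s ^ (a - 1) * (1 + s) - s ^ a * (1 + s) + s ^ a) := by
    intro s hs
    have heq : ψ =ᶠ[nhds s] fun r => r ^ a * Real.exp (-r) * (1 + r) :=
      Filter.eventuallyEq_of_mem (isOpen_Ioi.mem_nhds hs) hψ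
    rw [heq.deriv_eq]
    exact (hD1 a s hs).deriv
  have heq2 : deriv ψ =ᶠ[nhds r] fun s =>
      Real.exp (-s) * (a * s ^ (a - 1) * (1 + s) - s ^ a * (1 + s) + s ^ a) :=
    Filter.eventuallyEq_of_mem (isOpen_Ioi.mem_nhds hr) hderiv1
  have hderiv2 : deriv (deriv ψ) r =
      Real.exp (-r) * (a * (a - 1) * r ^ (a - 2) * (1 + r) - 2 * a * r ^ (a - 1) * (1 + r)
        + 2 * a * r ^ (a - 1) + r ^ a * (1 + r) - 2 * r ^ a) := by
    rw [heq2.deriv_eq]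
    exact (hD2 a r hr0).deriv
  rw [hψ r hr, hderiv2]
  -- express powers in terms of A = r^(a-2)
  have e1 : r ^ (a - 1) = r ^ (a - 2) * r := by
    rw [← Real.rpow_add_one hr0.ne']; ring_nf
  have e2 : r ^ a = r ^ (a - 1) * r := by
    rw [← Real.rpow_add_one hr0.ne']; ring_nf
  rw [e2, e1]
  have hk : k = 2 * a + 1 := by rw [ha]; ring
  rw [hk]
  have hr1 : r + 1 ≠ 0 := by positivity
  have hE : Real.exp (-r) ≠ 0 := Real.exp_ne_zero _
  field_simp
  ring
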